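/- For half-integers l1, m1, r1, l2, m2, r2, l3, m3, r3 ∈ ½ℤ, define fi : ℝ³ → ℝ by fi(x, y, z) = y^{li} · z^{mi} · e^{ri·x} (real powers). Then at every point (x, y, z) with y > 0 and z > 0, the Jacobian determinant det(∂fi/∂x, ∂fi/∂y, ∂fi/∂z) (the 3×3 determinant whose (j,i)-entry is the partial derivative of fi with respect to the j-th coordinate) equals M · y^{l1+l2+l3−1} · z^{m1+m2+m3−1} · e^{(r1+r2+r3)·x}, where M is the determinant of the 3×3 matrix with rows (r1,r2,r3), (l1,l2,l3), (m1,m2,m3). Consequently the 3-Lie Poisson algebra A over ℝ is realized inside the canonical Nambu 3-Lie algebra of smooth functions via L_{l,m}^r ↦ y^l z^m e^{rx}. -/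

import Mathlib

noncomputable section

open Real

/-- The function `f(x, y, z) = y^l · z^m · e^{r·x}` (real powers). -/
def nambuFun (l m r : ℝ) (x y z : ℝ) : ℝ := y ^ l * z ^ m * Real.exp (r * x)

lemma nambu_derivX (l m r x y z : ℝ) :
    deriv (fun t => nambuFun l m r t y z) x = r * (y ^ l * z ^ m * Real.exp (r * x)) := by
  unfold nambuFun
  have e : (fun t => y ^ l * z ^ m * Real.exp (r * t))
      = fun t => (y ^ l * z ^ m) * Real.exp (r * t) := rfl
  have hd : HasDerivAt (fun t => Real.exp (r * t)) (Real.exp (r * x) * r) x := by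
    simpa [Function.comp_def] using (Real.hasDerivAt_exp (r * x)).comp x ((hasDerivAt_id x).const_mul r)
  rw [e, deriv_const_mul _ hd.differentiableAt, hd.deriv]; ring

lemma nambu_derivY (l m r x y z : ℝ) (hy : 0 < y) :
    deriv (fun t => nambuFun l m r x t z) y = l * (y ^ (l - 1) * z ^ m * Real.exp (r * x)) := by
  unfold nambuFun
  have h1 : HasDerivAt (fun t : ℝ => t ^ l) (l * y ^ (l - 1)) y :=
    Real.hasDerivAt_rpow_const (Or.inl hy.ne')
  have e : (fun t => t ^ l * z ^ m * Real.exp (r * x))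
      = fun t => t ^ l * (z ^ m * Real.exp (r * x)) := by funext t; ring
  rw [e, (h1.mul_const (z ^ m * Real.exp (r * x))).deriv]; ring

lemma nambu_derivZ (l m r x y z : ℝ) (hz : 0 < z) :
    deriv (fun t => nambuFun l m r x y t) z = m * (y ^ l * z ^ (m - 1) * Real.exp (r * x)) := by
  unfold nambuFun
  have h1 : HasDerivAt (fun t : ℝ => t ^ m) (m * z ^ (m - 1)) z :=
    Real.hasDerivAt_rpow_const (Or.inl hz.ne')
  have e : (fun t => y ^ l * t ^ m * Real.exp (r * x))
      = fun t => t ^ m * (y ^ l * Real.exp (r * x)) := by funext t; ring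
  rw [e, (h1.mul_const (y ^ l * Real.exp (r * x))).deriv]; ring

theorem nambu_realization
    (l₁ m₁ r₁ l₂ m₂ r₂ l₃ m₃ r₃ : ℝ)
    (hl₁ : ∃ k : ℤ, l₁ = k / 2) (hm₁ : ∃ k : ℤ, m₁ = k / 2) (hr₁ : ∃ k : ℤ, r₁ = k / 2)
    (hl₂ : ∃ k : ℤ, l₂ = k / 2) (hm₂ : ∃ k : ℤ, m₂ = k / 2) (hr₂ : ∃ k : ℤ, r₂ = k / 2)
    (hl₃ : ∃ k : ℤ, l₃ = k / 2) (hm₃ : ∃ k : ℤ, m₃ = k / 2) (hr₃ : ∃ k : ℤ, r₃ = k / 2)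
    (x y z : ℝ) (hy : 0 < y) (hz : 0 < z) :
    Matrix.det
      !![deriv (fun t => nambuFun l₁ m₁ r₁ t y z) x,
         deriv (fun t => nambuFun l₂ m₂ r₂ t y z) x,
         deriv (fun t => nambuFun l₃ m₃ r₃ t y z) x;
         deriv (fun t => nambuFun l₁ m₁ r₁ x t z) y,
         deriv (fun t => nambuFun l₂ m₂ r₂ x t z) y,
         deriv (fun t => nambuFun l₃ m₃ r₃ x t z) y;
         deriv (fun t => nambuFun l₁ m₁ r₁ x y t) z,
         deriv (fun t => nambuFun l₂ m₂ r₂ x y t) z,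
         deriv (fun t => nambuFun l₃ m₃ r₃ x y t) z]
      = Matrix.det !![r₁, r₂, r₃; l₁, l₂, l₃; m₁, m₂, m₃]
          * y ^ (l₁ + l₂ + l₃ - 1) * z ^ (m₁ + m₂ + m₃ - 1)
          * Real.exp ((r₁ + r₂ + r₃) * x) := by
  rw [nambu_derivX, nambu_derivX, nambu_derivX,
      nambu_derivY _ _ _ _ _ _ hy, nambu_derivY _ _ _ _ _ _ hy, nambu_derivY _ _ _ _ _ _ hy,
      nambu_derivZ _ _ _ _ _ _ hz, nambu_derivZ _ _ _ _ _ _ hz, nambu_derivZ _ _ _ _ _ _ hz,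
      Matrix.det_fin_three, Matrix.det_fin_three]
  rw [Real.rpow_sub hy, Real.rpow_sub hy, Real.rpow_sub hy, Real.rpow_sub hy,
      Real.rpow_sub hz, Real.rpow_sub hz, Real.rpow_sub hz, Real.rpow_sub hz,
      Real.rpow_one, Real.rpow_one,
      Real.rpow_add hy, Real.rpow_add hy, Real.rpow_add hz, Real.rpow_add hz,
      add_mul, add_mul, Real.exp_add, Real.exp_add]
  simp only [Matrix.of_apply, Matrix.cons_val_zero, Matrix.cons_val_one,
    Matrix.cons_val_two, Matrix.head_cons, Matrix.tail_cons, Matrix.cons_val_fin_one]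
  field_simp
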